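/- arXiv:1111.6616 — 2 statements merged into one kernel-verified Lean document; each statement's English description precedes it below -/
import Mathlib

section
/- Let Γ be a countable oligomorphic relational structure over a finite relational signature. Then Γ has totally symmetric polymorphisms of all arities (i.e., for every n ≥ 1 an n-ary totally symmetric polymorphism) if and only if for every finite induced substructure S of Γ there is a homomorphism from the set structure P(S) to Γ. -/
/-- A relational signature: a set of relation symbols, each with an arity. -/
structure Signature where
  symbols : Type
  arity : symbols → ℕ

/-- A relational structure over the signature `σ`. -/
structure RelStruct (σ : Signature) where
  D : Type
  rel : ∀ s : σ.symbols, Set (Fin (σ.arity s) → D)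

/-- `f` is a homomorphism from `A` to `B`. -/
def IsHom {σ : Signature} (A B : RelStruct σ) (f : A.D → B.D) : Prop :=
  ∀ (s : σ.symbols) (t : Fin (σ.arity s) → A.D), t ∈ A.rel s → (fun i => f (t i)) ∈ B.rel s

/-- The bijection `e` is an automorphism of `Γ`. -/
def IsAuto {σ : Signature} (Γ : RelStruct σ) (e : Γ.D ≃ Γ.D) : Prop :=
  ∀ (s : σ.symbols) (t : Fin (σ.arity s) → Γ.D), t ∈ Γ.rel s ↔ (fun i => e (t i)) ∈ Γ.rel s

/-- An `n`-ary operation is totally symmetric if its value only depends on the set of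
arguments. -/
def TotallySymmetric {D : Type} {n : ℕ} (f : (Fin n → D) → D) : Prop :=
  ∀ x y : Fin n → D, Set.range x = Set.range y → f x = f y

/-- The `n`-ary operation `f` preserves the `m`-ary relation `R`. -/
def Preserves {D : Type} {n m : ℕ} (f : (Fin n → D) → D) (R : Set (Fin m → D)) : Prop :=
  ∀ t : Fin n → Fin m → D, (∀ i, t i ∈ R) → (fun j => f (fun i => t i j)) ∈ R

/-- A polymorphism of `Γ` is an operation preserving all relations of `Γ`. -/
def IsPolymorphism {σ : Signature} (Γ : RelStruct σ) {n : ℕ} (f : (Fin n → Γ.D) → Γ.D) : Prop :=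
  ∀ s : σ.symbols, Preserves f (Γ.rel s)

/-- The substructure of `Γ` induced on the subset `S` of its domain. -/
def induced {σ : Signature} (Γ : RelStruct σ) (S : Set Γ.D) : RelStruct σ where
  D := ↥S
  rel := fun s => {t | (fun i => (t i : Γ.D)) ∈ Γ.rel s}

/-- The set structure `P(B)`: the domain consists of all non-empty subsets of the domain
of `B`, and a tuple `(U_1, …, U_k)` is in `R^{P(B)}` iff for every `i` and every
`u ∈ U_i` there is a tuple `t ∈ R^B` with `t i = u` and `t j ∈ U_j` for all `j`. -/
def setStruct {σ : Signature} (B : RelStruct σ) : RelStruct σ where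
  D := {U : Set B.D // U.Nonempty}
  rel := fun s =>
    {U | ∀ (i : Fin (σ.arity s)) (u : B.D), u ∈ (U i).1 →
      ∃ t ∈ B.rel s, t i = u ∧ ∀ j, t j ∈ (U j).1}

/-- `Γ` is oligomorphic: for each `n`, the automorphism group of `Γ` has finitely many
orbits in its componentwise action on `n`-tuples. -/
def Oligomorphic {σ : Signature} (Γ : RelStruct σ) : Prop :=
  ∀ n : ℕ, ∃ F : Set (Fin n → Γ.D), F.Finite ∧
    ∀ x : Fin n → Γ.D, ∃ y ∈ F, ∃ e : Γ.D ≃ Γ.D, IsAuto Γ e ∧ (fun i => e (y i)) = x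

-- helper: surjection from Fin n onto a finite nonempty type of card ≤ n
lemma surjFin {α : Type} [Finite α] [Nonempty α] {n : ℕ} (h : Nat.card α ≤ n) :
    ∃ p : Fin n → α, Function.Surjective p := by
  have hpos : 0 < Nat.card α := Nat.card_pos
  obtain ⟨e⟩ : Nonempty (α ≃ Fin (Nat.card α)) := ⟨Finite.equivFin α⟩
  refine ⟨fun i => e.symm ⟨min i (Nat.card α - 1), by omega⟩, fun a => ?_⟩
  refine ⟨⟨e a, by have := (e a).2; omega⟩, ?_⟩
  have h3 : (⟨min ((e a : ℕ)) (Nat.card α - 1), by have := (e a).2; omega⟩ :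
      Fin (Nat.card α)) = e a := by
    ext; simp; have := (e a).2; omega
  simpa using congrArg e.symm h3

lemma stmt2_forward {σ : Signature} [Finite σ.symbols] (har : ∀ s : σ.symbols, 0 < σ.arity s)
    (Γ : RelStruct σ)
    (hpoly : ∀ n : ℕ, 1 ≤ n → ∃ f : (Fin n → Γ.D) → Γ.D,
      IsPolymorphism Γ f ∧ TotallySymmetric f)
    (S : Set Γ.D) (hS : S.Finite) :
    ∃ h : (setStruct (induced Γ S)).D → Γ.D, IsHom (setStruct (induced Γ S)) Γ h := by
  classical
  haveI : Finite ↥S := hS.to_subtype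
  obtain ⟨N, hN⟩ := (Set.finite_range σ.arity).bddAbove
  set cS := Nat.card ↥S with hcS
  set n := N * cS + cS + 1 with hndef
  obtain ⟨f, hf, hsym⟩ := hpoly n (by omega)
  -- enumerating tuples for each domain element
  have hex : ∀ U : (setStruct (induced Γ S)).D,
      ∃ p : Fin n → ↥(Subtype.val '' U.1 : Set Γ.D), Function.Surjective p := by
    intro U
    have hsub : (Subtype.val '' U.1 : Set Γ.D) ⊆ S := by
      rintro x ⟨u, _, rfl⟩; exact u.2
    haveI : Finite ↥(Subtype.val '' U.1 : Set Γ.D) := (hS.subset hsub).to_subtype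
    haveI : Nonempty ↥(Subtype.val '' U.1 : Set Γ.D) := by
      obtain ⟨u, hu⟩ := U.2; exact ⟨⟨u.1, u, hu, rfl⟩⟩
    have hcard : Nat.card ↥(Subtype.val '' U.1 : Set Γ.D) ≤ n := by
      have h1 : Nat.card ↥(Subtype.val '' U.1 : Set Γ.D) ≤ cS :=
        Nat.card_le_card_of_injective (Set.inclusion hsub) (Set.inclusion_injective hsub)
      omega
    exact surjFin hcard
  choose p hp using hex
  have hrange : ∀ U : (setStruct (induced Γ S)).D,
      Set.range (fun i => ((p U i : ↥(Subtype.val '' U.1 : Set Γ.D)) : Γ.D))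
        = (Subtype.val '' U.1 : Set Γ.D) := by
    intro U
    rw [show (fun i => ((p U i) : Γ.D)) = Subtype.val ∘ (p U) from rfl, Set.range_comp,
      (hp U).range_eq, Set.image_univ, Subtype.range_coe]
  refine ⟨fun U => f (fun i => (p U i : Γ.D)), ?_⟩
  intro s U hU
  -- hU : U ∈ (setStruct (induced Γ S)).rel s
  choose t ht1 ht2 ht3 using hU
  haveI hSne : Nonempty ↥S := ⟨(U ⟨0, har s⟩).2.some⟩
  haveI : Nonempty (Fin (σ.arity s)) := ⟨⟨0, har s⟩⟩
  -- surjection onto pairs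
  have hcardI : Nat.card (Fin (σ.arity s) × ↥S) ≤ n := by
    have h1 : Nat.card (Fin (σ.arity s) × ↥S) = σ.arity s * cS := by
      rw [Nat.card_prod, Nat.card_eq_fintype_card, Fintype.card_fin]
    have h2 : σ.arity s ≤ N := hN ⟨s, rfl⟩
    have := Nat.mul_le_mul_right cS h2
    omega
  obtain ⟨q, hq⟩ := surjFin (α := Fin (σ.arity s) × ↥S) hcardI
  let pick : Fin (σ.arity s) → ↥S → ↥S := fun j u => if u ∈ (U j).1 then u else (U j).2.some
  have hpickmem : ∀ j u, pick j u ∈ (U j).1 := by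
    intro j u
    by_cases h : u ∈ (U j).1
    · have e : pick j u = u := if_pos h
      rw [e]; exact h
    · have e : pick j u = ((U j).2.some : ↥S) := if_neg h
      rw [e]; exact (U j).2.some_mem
  have hpickeq : ∀ j u, u ∈ (U j).1 → pick j u = u := by
    intro j u h; exact if_pos h
  let row : Fin (σ.arity s) × ↥S → (Fin (σ.arity s) → ↥S) :=
    fun z => t z.1 (pick z.1 z.2) (hpickmem z.1 z.2)
  let T : Fin n → Fin (σ.arity s) → Γ.D := fun i j => ((row (q i)) j : Γ.D)
  have hTrel : ∀ i, T i ∈ Γ.rel s := fun i => ht1 _ _ _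
  have key := hf s T hTrel
  have hcol : ∀ j, Set.range (fun i => T i j) = (Subtype.val '' (U j).1 : Set Γ.D) := by
    intro j
    apply Set.eq_of_subset_of_subset
    · rintro x ⟨i, rfl⟩
      exact ⟨row (q i) j, ht3 _ _ _ j, rfl⟩
    · rintro x ⟨u, hu, rfl⟩
      obtain ⟨i, hi⟩ := hq (j, u)
      refine ⟨i, ?_⟩
      show ((row (q i)) j : Γ.D) = u.1
      rw [hi]
      have : row (j, u) j = u := by
        have h1 : row (j, u) j = pick j u := ht2 _ _ _
        rw [h1, hpickeq j u hu]
      rw [this]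
  have : (fun j => f (fun i => T i j)) = (fun j => f (fun i => (p (U j) i : Γ.D))) := by
    funext j
    exact hsym _ _ (by rw [hcol j, hrange (U j)])
  rwa [this] at key

lemma autoSymm {σ : Signature} {Γ : RelStruct σ} {e : Γ.D ≃ Γ.D} (he : IsAuto Γ e) :
    IsAuto Γ e.symm := by
  intro s t
  have := he s (fun i => e.symm (t i))
  simpa using this.symm

lemma stmt2_backward {σ : Signature} (har : ∀ s : σ.symbols, 0 < σ.arity s)
    (Γ : RelStruct σ) [Countable Γ.D] (holig : Oligomorphic Γ)
    (hhom : ∀ S : Set Γ.D, S.Finite →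
      ∃ h : (setStruct (induced Γ S)).D → Γ.D, IsHom (setStruct (induced Γ S)) Γ h)
    (n : ℕ) (hn : 1 ≤ n) :
    ∃ f : (Fin n → Γ.D) → Γ.D, IsPolymorphism Γ f ∧ TotallySymmetric f := by
  classical
  by_cases hD : Nonempty Γ.D
  case neg =>
    refine ⟨fun v => v ⟨0, hn⟩, ?_, ?_⟩
    · intro s t _
      exact (hD ⟨t ⟨0, hn⟩ ⟨0, har s⟩⟩).elim
    · intro x y _
      exact (hD ⟨x ⟨0, hn⟩⟩).elim
  obtain ⟨d⟩ := hD
  -- the countable domain of the "power structure" restricted to finite nonempty sets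
  haveI hQc : Countable {U : Set Γ.D // U.Nonempty ∧ U.Finite} := by
    have hinj : Function.Injective
        (fun s : {U : Set Γ.D // U.Nonempty ∧ U.Finite} => s.2.2.toFinset) := by
      intro a b h
      have h' : a.2.2.toFinset = b.2.2.toFinset := h
      ext1
      rw [← Set.Finite.coe_toFinset a.2.2, h', Set.Finite.coe_toFinset]
    exact hinj.countable
  haveI hQne : Nonempty {U : Set Γ.D // U.Nonempty ∧ U.Finite} :=
    ⟨⟨{d}, Set.singleton_nonempty d, Set.finite_singleton d⟩⟩
  obtain ⟨enum, henum⟩ := exists_surjective_nat {U : Set Γ.D // U.Nonempty ∧ U.Finite}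
  -- the relations of the power structure
  set RQ : ∀ s : σ.symbols, Set (Fin (σ.arity s) → {U : Set Γ.D // U.Nonempty ∧ U.Finite}) :=
    fun s => {U | ∃ t : Fin n → Fin (σ.arity s) → Γ.D,
      (∀ i, t i ∈ Γ.rel s) ∧ ∀ j, Set.range (fun i => t i j) = (U j).1} with hRQ
  -- partial homomorphisms on the first m elements of the enumeration
  set H : ℕ → Set (ℕ → Γ.D) := fun m => {x | ∀ (s : σ.symbols) (c : Fin (σ.arity s) → ℕ),
    (∀ j, c j < m) → ((fun j => enum (c j)) ∈ RQ s) → (fun j => x (c j)) ∈ Γ.rel s} with hH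
  set A : ∀ k : ℕ, ℕ → Set (Fin k → Γ.D) :=
    fun k m => {y | ∃ x ∈ H m, ∀ i : Fin k, x i = y i} with hA
  have Hmono : ∀ {m m' : ℕ}, m ≤ m' → H m' ⊆ H m := by
    intro m m' hm x hx s c hc
    exact hx s c (fun j => lt_of_lt_of_le (hc j) hm)
  have Amono : ∀ (k : ℕ) {m m' : ℕ}, m ≤ m' → A k m' ⊆ A k m := by
    rintro k m m' hm y ⟨x, hx, hxy⟩
    exact ⟨x, Hmono hm hx, hxy⟩
  -- nonemptiness of H m from the homomorphism hypothesis
  have Hne : ∀ m : ℕ, (H m).Nonempty := by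
    intro m
    set S : Set Γ.D := ⋃ i ∈ Finset.range m, ((enum i).1 : Set Γ.D) with hSdef
    have hSfin : S.Finite := Set.Finite.biUnion (Finset.range m).finite_toSet
      (fun i _ => (enum i).2.2)
    obtain ⟨h, hh⟩ := hhom S hSfin
    have hsub : ∀ i, i < m → (enum i).1 ⊆ S := by
      intro i hi u hu
      exact Set.mem_biUnion (Finset.mem_range.2 hi) hu
    have hlift : ∀ i, i < m → ((Subtype.val ⁻¹' (enum i).1 : Set ↥S)).Nonempty := by
      intro i hi
      obtain ⟨u, hu⟩ := (enum i).2.1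
      exact ⟨⟨u, hsub i hi hu⟩, hu⟩
    set lift : ∀ i, i < m → (setStruct (induced Γ S)).D :=
      fun i hi => ⟨Subtype.val ⁻¹' (enum i).1, hlift i hi⟩ with hliftdef
    refine ⟨fun i => if hi : i < m then h (lift i hi) else d, ?_⟩
    intro s c hc hcq
    obtain ⟨t, ht, hr⟩ := hcq
    have Hmem : (fun j => lift (c j) (hc j)) ∈ (setStruct (induced Γ S)).rel s := by
      intro j u hu
      -- hu : u ∈ Subtype.val ⁻¹' (enum (c j)).1
      have hu' : (u.1 : Γ.D) ∈ Set.range (fun i => t i j) := by rw [hr j]; exact hu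
      obtain ⟨i0, hi0⟩ := hu'
      have hmem : ∀ j', t i0 j' ∈ ((enum (c j')).1 : Set Γ.D) := by
        intro j'; rw [← hr j']; exact ⟨i0, rfl⟩
      refine ⟨fun j' => ⟨t i0 j', hsub (c j') (hc j') (hmem j')⟩, ?_, ?_, ?_⟩
      · show (fun j' => t i0 j') ∈ Γ.rel s
        exact ht i0
      · exact Subtype.ext hi0
      · intro j'
        exact hmem j'
    have := hh s _ Hmem
    have heq : (fun j => (if hi : c j < m then h (lift (c j) hi) else d))
        = (fun j => h (lift (c j) (hc j))) := by
      funext j; rw [dif_pos (hc j)]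
    rw [heq]
    exact this
  have Ane : ∀ k m, (A k m).Nonempty := by
    intro k m
    obtain ⟨x, hx⟩ := Hne m
    exact ⟨fun i => x i, x, hx, fun i => rfl⟩
  -- A is closed under automorphisms
  have Aauto : ∀ (k m : ℕ) (e : Γ.D ≃ Γ.D), IsAuto Γ e →
      ∀ y ∈ A k m, (fun i => e (y i)) ∈ A k m := by
    rintro k m e he y ⟨x, hx, hxy⟩
    refine ⟨fun i => e (x i), ?_, fun i => congrArg e (hxy i)⟩
    intro s c hc hq
    exact (he s _).mp (hx s c hc hq)
  -- A k m is the projection of A (k+1) m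
  have Aproj : ∀ k m, A k m = (fun (y : Fin (k+1) → Γ.D) (i : Fin k) => y i.castSucc) '' A (k+1) m := by
    intro k m
    ext y
    constructor
    · rintro ⟨x, hx, hxy⟩
      refine ⟨fun i : Fin (k+1) => x i, ⟨x, hx, fun i => rfl⟩, ?_⟩
      funext i
      show x ((i.castSucc : Fin (k+1)) : ℕ) = y i
      rw [Fin.coe_castSucc]
      exact hxy i
    · rintro ⟨y', ⟨x, hx, hxy'⟩, rfl⟩
      refine ⟨x, hx, fun i => ?_⟩
      show x (i : ℕ) = y' i.castSucc
      have := hxy' i.castSucc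
      rwa [Fin.coe_castSucc] at this
  -- stabilization via oligomorphy
  have stab : ∀ k : ℕ, ∃ M : ℕ, ∀ m, A k M ⊆ A k m := by
    intro k
    obtain ⟨F, hFfin, hF⟩ := holig k
    set M : ℕ := hFfin.toFinset.sup
      (fun y => if h : ∃ m, y ∉ A k m then Nat.find h else 0) with hM
    refine ⟨M, fun m x hx => ?_⟩
    obtain ⟨y, hyF, e, he, hey⟩ := hF x
    have he' : IsAuto Γ e.symm := autoSymm he
    have hy : y ∈ A k M := by
      have h1 := Aauto k M e.symm he' x hx
      have h2 : (fun i => e.symm (x i)) = y := by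
        funext i
        rw [← congrFun hey i]
        simp
      rwa [h2] at h1
    by_cases hbad : ∃ m', y ∉ A k m'
    · exfalso
      have hle : Nat.find hbad ≤ M := by
        have : y ∈ hFfin.toFinset := hFfin.mem_toFinset.2 hyF
        have hle2 := Finset.le_sup (f := fun y => if h : ∃ m, y ∉ A k m then Nat.find h else 0) this
        exact le_trans (le_of_eq (dif_pos hbad).symm) hle2
      exact Nat.find_spec hbad (Amono k hle hy)
    · push_neg at hbad
      have := Aauto k m e he y (hbad m)
      rwa [hey] at this
  set E : ∀ k : ℕ, Set (Fin k → Γ.D) := fun k => ⋂ m, A k m with hE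
  have Ene : (E 0).Nonempty := by
    obtain ⟨M, hM⟩ := stab 0
    obtain ⟨y, hy⟩ := Ane 0 M
    exact ⟨y, Set.mem_iInter.2 fun m => hM m hy⟩
  have ext : ∀ k (y : {y : Fin k → Γ.D // y ∈ E k}),
      ∃ y' : {y : Fin (k+1) → Γ.D // y ∈ E (k+1)}, ∀ i : Fin k, y'.1 i.castSucc = y.1 i := by
    intro k y
    obtain ⟨M, hM⟩ := stab (k+1)
    have hyA : y.1 ∈ A k M := Set.mem_iInter.1 y.2 M
    rw [Aproj k M] at hyA
    obtain ⟨y', hy', hproj⟩ := hyA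
    exact ⟨⟨y', Set.mem_iInter.2 fun m => hM m hy'⟩, fun i => congrFun hproj i⟩
  choose step hstep using ext
  obtain ⟨y0, hy0⟩ := Ene
  set seq : ∀ k : ℕ, {y : Fin k → Γ.D // y ∈ E k} :=
    fun k => Nat.rec ⟨y0, hy0⟩ step k with hseqdef
  set h' : ℕ → Γ.D := fun i => (seq (i+1)).1 ⟨i, Nat.lt_succ_self i⟩ with hh'
  have hcons : ∀ k (i : Fin k), (seq k).1 i = h' (i : ℕ) := by
    intro k
    induction k with
    | zero => exact fun i => absurd i.2 (Nat.not_lt_zero _)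
    | succ k ih =>
      intro i
      by_cases hik : (i : ℕ) < k
      · have h1 : (seq (k+1)).1 (Fin.castSucc ⟨i, hik⟩) = (seq k).1 ⟨i, hik⟩ :=
          hstep k (seq k) ⟨i, hik⟩
        have h2 : Fin.castSucc (⟨i, hik⟩ : Fin k) = i := by ext; simp
        rw [h2] at h1
        rw [h1]
        exact ih ⟨i, hik⟩
      · have hik' : (i : ℕ) = k := by omega
        have h2 : i = ⟨k, Nat.lt_succ_self k⟩ := by ext; simp [hik']
        rw [h2]
  -- the limit homomorphism on finite nonempty sets
  set g : {U : Set Γ.D // U.Nonempty ∧ U.Finite} → Γ.D :=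
    fun q => h' (Nat.find (henum q)) with hg
  have ghom : ∀ (s : σ.symbols) (U : Fin (σ.arity s) → {U : Set Γ.D // U.Nonempty ∧ U.Finite}),
      U ∈ RQ s → (fun j => g (U j)) ∈ Γ.rel s := by
    intro s U hU
    set c : Fin (σ.arity s) → ℕ := fun j => Nat.find (henum (U j)) with hc
    set k : ℕ := (Finset.univ.sup c) + 1 with hk
    have hck : ∀ j, c j < k := by
      intro j
      have := Finset.le_sup (f := c) (Finset.mem_univ j)
      omega
    have hseqk : (seq k).1 ∈ A k k := Set.mem_iInter.1 (seq k).2 k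
    obtain ⟨x, hx, hxy⟩ := hseqk
    have henumc : (fun j => enum (c j)) = U := by
      funext j; exact Nat.find_spec (henum (U j))
    have hrel : (fun j => x (c j)) ∈ Γ.rel s := by
      apply hx s c hck
      rw [henumc]
      exact hU
    have heq : (fun j => g (U j)) = (fun j => x (c j)) := by
      funext j
      have h1 : x (c j) = (seq k).1 ⟨c j, hck j⟩ := hxy ⟨c j, hck j⟩
      rw [h1, hcons k ⟨c j, hck j⟩]
    rw [heq]
    exact hrel
  -- the totally symmetric polymorphism
  refine ⟨fun v => g ⟨Set.range v, ⟨v ⟨0, hn⟩, ⟨0, hn⟩, rfl⟩, Set.finite_range v⟩, ?_, ?_⟩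
  · intro s t ht
    have hRQmem : (fun j => (⟨Set.range (fun i => t i j),
        ⟨t ⟨0, hn⟩ j, ⟨0, hn⟩, rfl⟩, Set.finite_range _⟩ :
        {U : Set Γ.D // U.Nonempty ∧ U.Finite})) ∈ RQ s :=
      ⟨t, ht, fun j => rfl⟩
    exact ghom s _ hRQmem
  · intro x y hxy
    exact congrArg g (Subtype.ext hxy)

/-- A countable oligomorphic structure over a finite relational signature has totally
symmetric polymorphisms of all arities iff the set structure `P(S)` of every finite
induced substructure `S` maps homomorphically to `Γ`. -/
theorem stmt2 {σ : Signature} [Finite σ.symbols] (har : ∀ s : σ.symbols, 0 < σ.arity s)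
    (Γ : RelStruct σ) [Countable Γ.D] (holig : Oligomorphic Γ) :
    (∀ n : ℕ, 1 ≤ n → ∃ f : (Fin n → Γ.D) → Γ.D,
      IsPolymorphism Γ f ∧ TotallySymmetric f) ↔
    (∀ S : Set Γ.D, S.Finite →
      ∃ h : (setStruct (induced Γ S)).D → Γ.D, IsHom (setStruct (induced Γ S)) Γ h) := by
  constructor
  · intro hp S hS
    exact stmt2_forward har Γ hp S hS
  · intro hh n hn
    exact stmt2_backward har Γ holig hh n hn
end

section
/- Let Γ be a countable relational structure of sub-exponential growth with automorphism group G and orbits U_1, …, U_k on the domain D, and for 1 ≤ i ≤ k let G_i := { α|_{U_i} : α ∈ G } be the transitive constituent of G on U_i. Assume that for each i there is a bijection b_i : U_i → ℚ such that G_i = { b_i^{-1} ∘ β ∘ b_i : β ∈ Aut(ℚ;<) }, where Aut(ℚ;<) is the group of order-preserving permutations of the rationals. Then a permutation α of D belongs to G if and only if α|_{U_i} ∈ G_i for each 1 ≤ i ≤ k. -/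
/-- The set of orbits of the action of `Aut(Γ)` on `n`-element subsets of the domain:
each orbit is the collection of all images of a fixed `n`-element set under
automorphisms. -/
def subsetOrbits {σ : Signature} (Γ : RelStruct σ) (n : ℕ) : Set (Set (Set Γ.D)) :=
  {O | ∃ S : Set Γ.D, S.Finite ∧ S.ncard = n ∧
    O = {T | ∃ e : Γ.D ≃ Γ.D, IsAuto Γ e ∧ e '' S = T}}

/-- `Γ` has exponential growth: there is a real `c > 1` such that for all sufficiently
large `n`, the number of orbits of `n`-subsets of `Γ` is at least `c ^ n`. -/
def ExpGrowth {σ : Signature} (Γ : RelStruct σ) : Prop :=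
  ∃ c : ℝ, 1 < c ∧ ∃ N : ℕ, ∀ n ≥ N,
    (⌈c ^ n⌉₊ : Cardinal) ≤ Cardinal.mk ↥(subsetOrbits Γ n)

/-- The orbit of the element `a` under `Aut(Γ)`. -/
def orbitOf {σ : Signature} (Γ : RelStruct σ) (a : Γ.D) : Set Γ.D :=
  {x | ∃ e : Γ.D ≃ Γ.D, IsAuto Γ e ∧ e a = x}

/-- `U` is an orbit of the action of `Aut(Γ)` on the domain. -/
def IsOrbit {σ : Signature} (Γ : RelStruct σ) (U : Set Γ.D) : Prop :=
  ∃ a : Γ.D, U = orbitOf Γ a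

section basic
variable {σ : Signature} {Γ : RelStruct σ}

lemma isAuto_refl : IsAuto Γ (Equiv.refl Γ.D) := by
  intro s t; rfl

lemma isAuto_trans {e f : Γ.D ≃ Γ.D} (he : IsAuto Γ e) (hf : IsAuto Γ f) :
    IsAuto Γ (e.trans f) := by
  intro s t
  exact (he s t).trans (hf s fun i => e (t i))

lemma isAuto_symm {e : Γ.D ≃ Γ.D} (he : IsAuto Γ e) : IsAuto Γ e.symm := by
  intro s t
  have := he s (fun i => e.symm (t i))
  simpa using this.symm

lemma isAuto_pow {φ : Γ.D ≃ Γ.D} (hφ : IsAuto Γ φ) (r : ℕ) :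
    IsAuto Γ ((φ : Equiv.Perm Γ.D) ^ r) := by
  induction r with
  | zero => simpa [pow_zero, Equiv.Perm.one_def] using (isAuto_refl : IsAuto Γ (Equiv.refl Γ.D))
  | succ r ih =>
      rw [pow_succ]
      have : (φ : Equiv.Perm Γ.D) ^ r * φ = Equiv.trans φ ((φ : Equiv.Perm Γ.D) ^ r) := rfl
      rw [this]
      exact isAuto_trans hφ ih

end basic

/-- two strictly monotone maps with equal image on a finset agree on it -/
lemma mono_agree {β ρ : ℚ → ℚ} (hβ : StrictMono β) (hρ : StrictMono ρ)
    (X : Finset ℚ) (him : X.image β = X.image ρ) : ∀ x ∈ X, β x = ρ x := by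
  classical
  have hrange : ∀ f : ℚ → ℚ, Set.range (f ∘ X.orderEmbOfFin rfl) = ↑(X.image f) := by
    intro f
    rw [Set.range_comp, Finset.range_orderEmbOfFin, Finset.coe_image]
  have key : β ∘ X.orderEmbOfFin rfl = ρ ∘ X.orderEmbOfFin rfl := by
    apply ((hβ.comp (X.orderEmbOfFin rfl).strictMono).range_inj
      (hρ.comp (X.orderEmbOfFin rfl).strictMono)).mp
    rw [hrange, hrange, him]
  intro x hx
  have hxr : x ∈ Set.range (X.orderEmbOfFin rfl) := by
    rw [Finset.range_orderEmbOfFin]; exact hx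
  obtain ⟨l, hl⟩ := hxr
  have := congrFun key l
  simp only [Function.comp_apply, hl] at this
  exact this

/-- strictly monotone bijection between unions of consecutive blocks maps blocks to blocks -/
lemma blocks_align {β : ℚ → ℚ} (hβ : StrictMono β) :
    ∀ (m : ℕ) (s t : ℕ → Finset ℚ),
      (∀ r r', r < r' → r' < m → ∀ x ∈ s r, ∀ y ∈ s r', x < y) →
      (∀ r r', r < r' → r' < m → ∀ x ∈ t r, ∀ y ∈ t r', x < y) →
      (∀ r, r < m → (s r).card = (t r).card) →
      ((Finset.range m).biUnion s).image β = (Finset.range m).biUnion t →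
      ∀ r, r < m → (s r).image β = t r := by
  classical
  intro m
  induction m with
  | zero => intro s t _ _ _ _ r hr; omega
  | succ m ih =>
    intro s t hs ht hcard him r hr
    set X := (Finset.range (m+1)).biUnion s with hXdef
    set Y := (Finset.range (m+1)).biUnion t with hYdef
    -- characterization of block 0
    have charS : ∀ x ∈ X, (x ∈ s 0 ↔ (X.filter (· < x)).card < (s 0).card) := by
      intro x hx
      constructor
      · intro hx0
        have hsub : X.filter (· < x) ⊆ (s 0).erase x := by
          intro y hy
          rw [Finset.mem_filter] at hy
          obtain ⟨hyX, hyx⟩ := hy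
          rw [hXdef, Finset.mem_biUnion] at hyX
          obtain ⟨r', hr', hyr'⟩ := hyX
          rcases Nat.eq_zero_or_pos r' with h0 | hpos
          · subst h0
            exact Finset.mem_erase.mpr ⟨ne_of_lt hyx, hyr'⟩
          · exact absurd (hs 0 r' hpos (Finset.mem_range.mp hr') x hx0 y hyr') (asymm hyx)
        calc (X.filter (· < x)).card ≤ ((s 0).erase x).card := Finset.card_le_card hsub
          _ < (s 0).card := Finset.card_erase_lt_of_mem hx0
      · intro hcount
        by_contra hx0
        rw [hXdef, Finset.mem_biUnion] at hx
        obtain ⟨r', hr', hxr'⟩ := hx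
        have hpos : 0 < r' := by
          rcases Nat.eq_zero_or_pos r' with h0 | h; · exact absurd (h0 ▸ hxr') hx0
          · exact h
        have hsub : s 0 ⊆ X.filter (· < x) := by
          intro y hy
          refine Finset.mem_filter.mpr ⟨?_, hs 0 r' hpos (Finset.mem_range.mp hr') y hy x hxr'⟩
          exact Finset.mem_biUnion.mpr ⟨0, Finset.mem_range.mpr (Nat.succ_pos m), hy⟩
        exact absurd (Finset.card_le_card hsub) (not_le.mpr hcount)
    have charT : ∀ x ∈ Y, (x ∈ t 0 ↔ (Y.filter (· < x)).card < (t 0).card) := by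
      intro x hx
      constructor
      · intro hx0
        have hsub : Y.filter (· < x) ⊆ (t 0).erase x := by
          intro y hy
          rw [Finset.mem_filter] at hy
          obtain ⟨hyX, hyx⟩ := hy
          rw [hYdef, Finset.mem_biUnion] at hyX
          obtain ⟨r', hr', hyr'⟩ := hyX
          rcases Nat.eq_zero_or_pos r' with h0 | hpos
          · subst h0
            exact Finset.mem_erase.mpr ⟨ne_of_lt hyx, hyr'⟩
          · exact absurd (ht 0 r' hpos (Finset.mem_range.mp hr') x hx0 y hyr') (asymm hyx)
        calc (Y.filter (· < x)).card ≤ ((t 0).erase x).card := Finset.card_le_card hsub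
          _ < (t 0).card := Finset.card_erase_lt_of_mem hx0
      · intro hcount
        by_contra hx0
        rw [hYdef, Finset.mem_biUnion] at hx
        obtain ⟨r', hr', hxr'⟩ := hx
        have hpos : 0 < r' := by
          rcases Nat.eq_zero_or_pos r' with h0 | h; · exact absurd (h0 ▸ hxr') hx0
          · exact h
        have hsub : t 0 ⊆ Y.filter (· < x) := by
          intro y hy
          refine Finset.mem_filter.mpr ⟨?_, ht 0 r' hpos (Finset.mem_range.mp hr') y hy x hxr'⟩
          exact Finset.mem_biUnion.mpr ⟨0, Finset.mem_range.mpr (Nat.succ_pos m), hy⟩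
        exact absurd (Finset.card_le_card hsub) (not_le.mpr hcount)
    -- counts preserved by β
    have hcnt : ∀ x ∈ X, (Y.filter (· < β x)).card = (X.filter (· < x)).card := by
      intro x hx
      have : Y.filter (· < β x) = (X.filter (· < x)).image β := by
        apply Finset.ext
        intro z
        rw [Finset.mem_filter, Finset.mem_image]
        constructor
        · rintro ⟨hzY, hzlt⟩
          rw [← him, Finset.mem_image] at hzY
          obtain ⟨y, hyX, rfl⟩ := hzY
          exact ⟨y, Finset.mem_filter.mpr ⟨hyX, hβ.lt_iff_lt.mp hzlt⟩, rfl⟩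
        · rintro ⟨y, hy, rfl⟩
          rw [Finset.mem_filter] at hy
          exact ⟨him ▸ Finset.mem_image_of_mem β hy.1, hβ.lt_iff_lt.mpr hy.2⟩
      rw [this, Finset.card_image_of_injective _ hβ.injective]
    -- block 0 image
    have h0 : (s 0).image β = t 0 := by
      have hmem0 : ∀ x ∈ s 0, x ∈ X :=
        fun x hx => Finset.mem_biUnion.mpr ⟨0, Finset.mem_range.mpr (Nat.succ_pos m), hx⟩
      have hsub : (s 0).image β ⊆ t 0 := by
        intro z hz
        rw [Finset.mem_image] at hz
        obtain ⟨x, hx, rfl⟩ := hz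
        have hxX := hmem0 x hx
        have hβxY : β x ∈ Y := him ▸ Finset.mem_image_of_mem β hxX
        refine (charT (β x) hβxY).mpr ?_
        rw [hcnt x hxX, ← hcard 0 (Nat.succ_pos m)]
        exact (charS x hxX).mp hx
      apply Finset.eq_of_subset_of_card_le hsub
      rw [Finset.card_image_of_injective _ hβ.injective, hcard 0 (Nat.succ_pos m)]
    rcases Nat.eq_zero_or_pos r with h0r | hposr
    · subst h0r; exact h0
    -- inductive part
    have hdecX : X = s 0 ∪ (Finset.range m).biUnion (fun r => s (r+1)) := by
      rw [hXdef]
      apply Finset.ext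
      intro z
      simp only [Finset.mem_union, Finset.mem_biUnion, Finset.mem_range]
      constructor
      · rintro ⟨r', hr', hz⟩
        rcases Nat.eq_zero_or_pos r' with h | h
        · subst h; exact Or.inl hz
        · exact Or.inr ⟨r' - 1, by omega, by rwa [Nat.sub_add_cancel h]⟩
      · rintro (hz | ⟨r', hr', hz⟩)
        · exact ⟨0, Nat.succ_pos m, hz⟩
        · exact ⟨r' + 1, by omega, hz⟩
    have hdecY : Y = t 0 ∪ (Finset.range m).biUnion (fun r => t (r+1)) := by
      rw [hYdef]
      apply Finset.ext
      intro z
      simp only [Finset.mem_union, Finset.mem_biUnion, Finset.mem_range]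
      constructor
      · rintro ⟨r', hr', hz⟩
        rcases Nat.eq_zero_or_pos r' with h | h
        · subst h; exact Or.inl hz
        · exact Or.inr ⟨r' - 1, by omega, by rwa [Nat.sub_add_cancel h]⟩
      · rintro (hz | ⟨r', hr', hz⟩)
        · exact ⟨0, Nat.succ_pos m, hz⟩
        · exact ⟨r' + 1, by omega, hz⟩
    have hdisjS : Disjoint (s 0) ((Finset.range m).biUnion (fun r => s (r+1))) := by
      rw [Finset.disjoint_left]
      intro z hz0 hz1
      rw [Finset.mem_biUnion] at hz1
      obtain ⟨r', hr', hz1⟩ := hz1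
      exact lt_irrefl z (hs 0 (r'+1) (Nat.succ_pos r') (by
        exact Nat.succ_lt_succ (Finset.mem_range.mp hr')) z hz0 z hz1)
    have hdisjT : Disjoint (t 0) ((Finset.range m).biUnion (fun r => t (r+1))) := by
      rw [Finset.disjoint_left]
      intro z hz0 hz1
      rw [Finset.mem_biUnion] at hz1
      obtain ⟨r', hr', hz1⟩ := hz1
      exact lt_irrefl z (ht 0 (r'+1) (Nat.succ_pos r') (by
        exact Nat.succ_lt_succ (Finset.mem_range.mp hr')) z hz0 z hz1)
    have him' : (((Finset.range m).biUnion (fun r => s (r+1))).image β)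
        = (Finset.range m).biUnion (fun r => t (r+1)) := by
      have h1 : X.image β = (s 0).image β ∪ ((Finset.range m).biUnion (fun r => s (r+1))).image β := by
        rw [hdecX, Finset.image_union]
      have h2 : t 0 ∪ ((Finset.range m).biUnion (fun r => s (r+1))).image β
          = t 0 ∪ (Finset.range m).biUnion (fun r => t (r+1)) := by
        rw [← h0] at hdecY ⊢
        rw [← h1, him, hdecY, h0]
      have hd1 : Disjoint (t 0) (((Finset.range m).biUnion (fun r => s (r+1))).image β) := by
        rw [← h0]
        exact Finset.disjoint_image (hβ.injective) |>.mpr hdisjS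
      calc ((Finset.range m).biUnion (fun r => s (r+1))).image β
          = (t 0 ∪ ((Finset.range m).biUnion (fun r => s (r+1))).image β) \ t 0 :=
            (Finset.union_sdiff_cancel_left hd1).symm
        _ = (t 0 ∪ (Finset.range m).biUnion (fun r => t (r+1))) \ t 0 := by rw [h2]
        _ = (Finset.range m).biUnion (fun r => t (r+1)) := Finset.union_sdiff_cancel_left hdisjT
    have := ih (fun r => s (r+1)) (fun r => t (r+1))
      (fun r r' hrr' hr'm => hs (r+1) (r'+1) (by omega) (by omega))
      (fun r r' hrr' hr'm => ht (r+1) (r'+1) (by omega) (by omega))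
      (fun r hrm => hcard (r+1) (by omega)) him' (r-1) (by omega)
    rw [Nat.sub_add_cancel hposr] at this
    exact this

def blkD (A A' pad : Finset ℚ) (n : ℕ) (M : ℚ) (w : ℕ → Bool) (r : ℕ) : Finset ℚ :=
  if r < n then (cond (w r) A' A).image (fun x => x + (r : ℚ) * M) else pad

lemma blkD_of_lt {A A' pad : Finset ℚ} {n : ℕ} {M : ℚ} {w : ℕ → Bool} {r : ℕ} (h : r < n) :
    blkD A A' pad n M w r = (cond (w r) A' A).image (fun x => x + (r : ℚ) * M) :=
  if_pos h

lemma blkD_of_ge {A A' pad : Finset ℚ} {n : ℕ} {M : ℚ} {w : ℕ → Bool} {r : ℕ} (h : ¬ r < n) :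
    blkD A A' pad n M w r = pad :=
  if_neg h

lemma blkD_card {A A' pad : Finset ℚ} {n q : ℕ} {M : ℚ} {w : ℕ → Bool} {r : ℕ}
    (hA : A.card = q) (hA' : A'.card = q) :
    (blkD A A' pad n M w r).card = if r < n then q else pad.card := by
  by_cases h : r < n
  · rw [blkD_of_lt h, if_pos h, Finset.card_image_of_injective _ (add_left_injective _)]
    cases w r <;> simp [hA, hA']
  · rw [blkD_of_ge h, if_neg h]

lemma blkD_ord {A A' pad : Finset ℚ} {n : ℕ} {M lo hi : ℚ}
    (hbd : ∀ x ∈ A ∪ A', lo ≤ x ∧ x ≤ hi)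
    (hM0 : 0 < M) (hMd : hi - lo < M)
    (hpad : ∀ x ∈ pad, hi + n * M + 1 ≤ x) (w : ℕ → Bool) :
    ∀ r r', r < r' → r' < n + 1 → ∀ x ∈ blkD A A' pad n M w r, ∀ y ∈ blkD A A' pad n M w r',
      x < y := by
  intro r r' hrr' hr'n x hx y hy
  have hrn : r < n := by omega
  rw [blkD_of_lt hrn, Finset.mem_image] at hx
  obtain ⟨a, ha, rfl⟩ := hx
  have hamem : a ∈ A ∪ A' := by
    cases hwr : w r <;> rw [hwr] at ha
    · exact Finset.mem_union_left _ ha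
    · exact Finset.mem_union_right _ ha
  have hab := hbd a hamem
  by_cases hr'lt : r' < n
  · rw [blkD_of_lt hr'lt, Finset.mem_image] at hy
    obtain ⟨b, hb, rfl⟩ := hy
    have hbmem : b ∈ A ∪ A' := by
      cases hwr' : w r' <;> rw [hwr'] at hb
      · exact Finset.mem_union_left _ hb
      · exact Finset.mem_union_right _ hb
    have hbb := hbd b hbmem
    have hcast : (r : ℚ) + 1 ≤ (r' : ℚ) := by exact_mod_cast hrr'
    nlinarith [hab.1, hab.2, hbb.1, hbb.2]
  · rw [blkD_of_ge hr'lt] at hy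
    have hylb := hpad y hy
    have hcast : (r : ℚ) + 1 ≤ (n : ℚ) := by exact_mod_cast hrn
    nlinarith [hab.1, hab.2]

lemma blkD_TQcard {A A' pad : Finset ℚ} {n q : ℕ} {M lo hi : ℚ}
    (hA : A.card = q) (hA' : A'.card = q)
    (hbd : ∀ x ∈ A ∪ A', lo ≤ x ∧ x ≤ hi)
    (hM0 : 0 < M) (hMd : hi - lo < M)
    (hpad : ∀ x ∈ pad, hi + n * M + 1 ≤ x) (w : ℕ → Bool) :
    ((Finset.range (n+1)).biUnion (blkD A A' pad n M w)).card = n * q + pad.card := by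
  classical
  rw [Finset.card_biUnion]
  · have : ∀ r ∈ Finset.range n, (blkD A A' pad n M w r).card = q := by
      intro r hr
      rw [blkD_card hA hA', if_pos (Finset.mem_range.mp hr)]
    rw [Finset.sum_range_succ]
    rw [Finset.sum_congr rfl this, Finset.sum_const, Finset.card_range, smul_eq_mul,
      blkD_card hA hA', if_neg (lt_irrefl n)]
  · intro r hr r' hr' hne
    rw [Function.onFun, Finset.disjoint_left]
    intro z hz hz'
    rcases Nat.lt_or_ge r r' with h | h
    · exact lt_irrefl z (blkD_ord hbd hM0 hMd hpad w r r' h (Finset.mem_range.mp hr') z hz z hz')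
    · have h2 : r' < r := by omega
      exact lt_irrefl z (blkD_ord hbd hM0 hMd hpad w r' r h2 (Finset.mem_range.mp hr) z hz' z hz)

lemma arith_bound (K m : ℕ) (hK : 0 < K) (hm : 2 * K ≤ m) :
    ((2:ℝ) ^ ((1:ℝ) / (2 * (K:ℝ)))) ^ m ≤ ((2 ^ (m / K) : ℕ) : ℝ) := by
  set n := m / K with hn
  have hKr : (0:ℝ) < (K:ℝ) := by exact_mod_cast hK
  have hn1 : 1 ≤ n := by
    rw [hn, Nat.le_div_iff_mul_le hK]; omega
  have hmod := Nat.div_add_mod m K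
  have hmodlt := Nat.mod_lt m hK
  have h1 : (m:ℝ) < (K:ℝ) * (n:ℝ) + (K:ℝ) := by
    have : (K:ℝ) * (n:ℝ) + ((m % K : ℕ) : ℝ) = (m:ℝ) := by exact_mod_cast hmod
    have h2 : ((m % K : ℕ) : ℝ) < (K:ℝ) := by exact_mod_cast hmodlt
    linarith
  have hnr : (1:ℝ) ≤ (n:ℝ) := by exact_mod_cast hn1
  have hexp : (1:ℝ) / (2 * (K:ℝ)) * (m:ℝ) ≤ (n:ℝ) := by
    rw [div_mul_eq_mul_div, one_mul, div_le_iff₀ (by positivity)]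
    nlinarith
  calc ((2:ℝ) ^ ((1:ℝ) / (2 * (K:ℝ)))) ^ m
      = ((2:ℝ) ^ ((1:ℝ) / (2 * (K:ℝ)))) ^ ((m:ℕ):ℝ) := by
        rw [Real.rpow_natCast]
    _ = (2:ℝ) ^ ((1:ℝ) / (2 * (K:ℝ)) * (m:ℝ)) := by
        rw [← Real.rpow_mul (by norm_num)]
    _ ≤ (2:ℝ) ^ ((n:ℝ)) := Real.rpow_le_rpow_of_exponent_le one_le_two hexp
    _ = ((2 ^ n : ℕ) : ℝ) := by
        rw [Real.rpow_natCast]; push_cast; ring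

lemma arith_one_lt (K : ℕ) (hK : 0 < K) : (1:ℝ) < (2:ℝ) ^ ((1:ℝ) / (2 * (K:ℝ))) := by
  have hKr : (0:ℝ) < (K:ℝ) := by exact_mod_cast hK
  rw [show (1:ℝ) = (2:ℝ) ^ (0:ℝ) by simp]
  apply Real.rpow_lt_rpow_of_exponent_lt (by norm_num)
  positivity

lemma growth_of_fail {σ : Signature} {Γ : RelStruct σ}
    {k : ℕ} {U : Fin k → Set Γ.D}
    (c : Fin k → Γ.D → ℚ) (u : Fin k → ℚ → Γ.D)
    (hu : ∀ i t, u i t ∈ U i)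
    (hcu : ∀ i t, c i (u i t) = t)
    (huc : ∀ i x, x ∈ U i → u i (c i x) = x)
    (hcoord : ∀ (i : Fin k) (g : Γ.D ≃ Γ.D), IsAuto Γ g →
      ∃ β : ℚ ≃ ℚ, StrictMono ⇑β ∧ ∀ x ∈ U i, g x ∈ U i ∧ c i (g x) = β (c i x))
    (hreal : ∀ (i : Fin k) (β : ℚ ≃ ℚ), StrictMono ⇑β →
      ∃ g : Γ.D ≃ Γ.D, IsAuto Γ g ∧ ∀ x ∈ U i, g x = u i (β (c i x)))
    (hdisj : ∀ (i j : Fin k) (x : Γ.D), x ∈ U i → x ∈ U j → i = j)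
    (hcover : ∀ x : Γ.D, ∃ i, x ∈ U i)
    (i : Fin k) (e : Γ.D ≃ Γ.D) (he : IsAuto Γ e)
    (A C : Finset Γ.D) (hA : ∀ x ∈ A, x ∈ U i) (hC : ∀ x ∈ C, x ∉ U i)
    (hAne : A.Nonempty)
    (hfail : ¬ ∃ g : Γ.D ≃ Γ.D, IsAuto Γ g ∧ (∀ x ∈ A, g x = e x) ∧ (∀ x ∈ C, g x = x)) :
    ExpGrowth Γ := by
  classical
  obtain ⟨ρ, hρmono, hρ⟩ := hcoord i e he
  have hcinjU : ∀ (j : Fin k) (x y : Γ.D), x ∈ U j → y ∈ U j → c j x = c j y → x = y := by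
    intro j x y hx hy hcc
    rw [← huc j x hx, ← huc j y hy, hcc]
  have huinj : ∀ j : Fin k, Function.Injective (u j) := by
    intro j a b hab
    have := congrArg (c j) hab
    rwa [hcu, hcu] at this
  set q := A.card with hqdef
  have hqpos : 0 < q := Finset.card_pos.mpr hAne
  set Ah : Finset ℚ := A.image (c i) with hAh
  set Ah' : Finset ℚ := Ah.image ⇑ρ with hAh'
  have hAhcard : Ah.card = q := by
    rw [hAh, hqdef]
    apply Finset.card_image_of_injOn
    intro x hx y hy
    exact hcinjU i x y (hA x hx) (hA y hy)
  have hAh'card : Ah'.card = q := by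
    rw [hAh', Finset.card_image_of_injective _ ρ.injective, hAhcard]
  have hWne : (Ah ∪ Ah').Nonempty := by
    obtain ⟨a, ha⟩ := hAne
    exact ⟨c i a, Finset.mem_union_left _ (Finset.mem_image_of_mem _ ha)⟩
  set lo := (Ah ∪ Ah').min' hWne with hlo
  set hi := (Ah ∪ Ah').max' hWne with hhi
  set M : ℚ := hi - lo + 1 with hM
  have hlohi : lo ≤ hi := Finset.min'_le _ _ ((Ah ∪ Ah').max'_mem hWne)
  have hM0 : 0 < M := by rw [hM]; linarith
  have hMd : hi - lo < M := by rw [hM]; linarith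
  have hbd : ∀ x ∈ Ah ∪ Ah', lo ≤ x ∧ x ≤ hi :=
    fun x hx => ⟨Finset.min'_le _ x hx, Finset.le_max' _ x hx⟩
  have haddmono : StrictMono ⇑(Equiv.addRight M) := by
    intro a b h
    simp only [Equiv.coe_addRight]
    exact add_lt_add_left h M
  obtain ⟨φ0, hφauto, hφc⟩ := hreal i (Equiv.addRight M) haddmono
  have hφc' : ∀ x ∈ U i, φ0 x = u i (c i x + M) := by
    intro x hx
    rw [hφc x hx]
    simp [Equiv.coe_addRight]
  set φ : Equiv.Perm Γ.D := φ0 with hφ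
  have powauto : ∀ r : ℕ, IsAuto Γ (φ ^ r) := fun r => isAuto_pow hφauto r
  have powfact : ∀ (r : ℕ) (x : Γ.D), x ∈ U i →
      (φ ^ r) x ∈ U i ∧ c i ((φ ^ r) x) = c i x + (r : ℚ) * M := by
    intro r
    induction r with
    | zero =>
      intro x hx
      constructor
      · simpa using hx
      · simp
    | succ r ih =>
      intro x hx
      obtain ⟨h1, h2⟩ := ih x hx
      have happ : (φ ^ (r+1)) x = φ0 ((φ ^ r) x) := by
        rw [pow_succ']
        rfl
      have hφx := hφc' _ h1
      constructor
      · rw [happ, hφx]; exact hu i _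
      · rw [happ, hφx, hcu, h2]
        push_cast
        ring
  have hpres : ∀ (j : Fin k) (g : Γ.D ≃ Γ.D), IsAuto Γ g → ∀ x ∈ U j, g x ∈ U j := by
    intro j g hg x hx
    obtain ⟨β, hβ, h⟩ := hcoord j g hg
    exact (h x hx).1
  set K := C.card + q with hKdef
  have hKpos : 0 < K := by omega
  refine ⟨(2:ℝ) ^ ((1:ℝ)/(2*(K:ℝ))), arith_one_lt K hKpos, 2*K, ?_⟩
  intro m hm
  set n := m / K with hn
  have hn2 : 2 ≤ n := by
    rw [hn, Nat.le_div_iff_mul_le hKpos]; omega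
  set Zset : Finset Γ.D := (Finset.range n).biUnion (fun r => C.image ⇑(φ ^ r)) with hZ
  have hZcard : Zset.card + n*q ≤ m := by
    have h1 : Zset.card ≤ n * C.card := by
      calc Zset.card ≤ ∑ r ∈ Finset.range n, (C.image ⇑(φ ^ r)).card := Finset.card_biUnion_le
        _ ≤ ∑ _r ∈ Finset.range n, C.card := Finset.sum_le_sum (fun r _ => Finset.card_image_le)
        _ = n * C.card := by rw [Finset.sum_const, Finset.card_range, smul_eq_mul]
    have h2 : n * K ≤ m := by
      rw [hn, mul_comm]
      exact Nat.mul_div_le m K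
    have h3 : n * C.card + n * q = n * K := by rw [hKdef]; ring
    omega
  set p := m - (Zset.card + n * q) with hp
  set pad : Finset ℚ := (Finset.range p).image (fun t : ℕ => hi + n*M + 1 + t) with hpad
  have hpadcard : pad.card = p := by
    rw [hpad, Finset.card_image_of_injective, Finset.card_range]
    intro a b hab
    have : (a:ℚ) = b := by
      field_simp at hab
      exact_mod_cast add_left_cancel hab
    exact_mod_cast this
  have hpadlb : ∀ x ∈ pad, hi + n*M + 1 ≤ x := by
    rw [hpad]
    intro x hx
    rw [Finset.mem_image] at hx
    obtain ⟨t, _ht, rfl⟩ := hx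
    have : (0:ℚ) ≤ t := Nat.cast_nonneg t
    linarith
  set TQ : (ℕ → Bool) → Finset ℚ := fun w => (Finset.range (n+1)).biUnion (blkD Ah Ah' pad n M w) with hTQ
  set SB : (ℕ → Bool) → Finset Γ.D := fun w => Zset ∪ (TQ w).image (u i) with hSB
  have hZnotU : ∀ z ∈ Zset, z ∉ U i := by
    intro z hz hzU
    rw [hZ, Finset.mem_biUnion] at hz
    obtain ⟨r, _hr, hz⟩ := hz
    rw [Finset.mem_image] at hz
    obtain ⟨x, hxC, rfl⟩ := hz
    have hxU : x ∈ U i := by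
      have := hpres i ((φ ^ r).symm) (isAuto_symm (powauto r)) _ hzU
      simpa using this
    exact hC x hxC hxU
  have hScard : ∀ w, (SB w).card = m := by
    intro w
    simp only [hSB]
    rw [Finset.card_union_of_disjoint, Finset.card_image_of_injective _ (huinj i)]
    · simp only [hTQ]
      rw [blkD_TQcard hAhcard hAh'card hbd hM0 hMd hpadlb w, hpadcard]
      omega
    · rw [Finset.disjoint_right]
      intro x hximg hxZ
      rw [Finset.mem_image] at hximg
      obtain ⟨t, _ht, rfl⟩ := hximg
      exact hZnotU _ hxZ (hu i t)
  set OO : (ℕ → Bool) → Set (Set Γ.D) :=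
    fun w => {T | ∃ g : Γ.D ≃ Γ.D, IsAuto Γ g ∧ ⇑g '' ↑(SB w) = T} with hOO
  have hOmem : ∀ w, OO w ∈ subsetOrbits Γ m :=
    fun w => ⟨↑(SB w), (SB w).finite_toSet, by rw [Set.ncard_coe_finset, hScard w], rfl⟩
  have hUim : ∀ (j : Fin k) (g : Γ.D ≃ Γ.D), IsAuto Γ g → ⇑g '' U j = U j := by
    intro j g hg
    apply Set.Subset.antisymm
    · rintro _ ⟨x, hx, rfl⟩
      exact hpres j g hg x hx
    · intro x hx
      exact ⟨g.symm x, by simpa using hpres j g.symm (isAuto_symm hg) x hx, by simp⟩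
  have hSBinterZ : ∀ (w : ℕ → Bool) (j : Fin k), j ≠ i →
      (↑(SB w) : Set Γ.D) ∩ U j = ↑Zset ∩ U j := by
    intro w j hji
    simp only [hSB]
    ext z
    rw [Finset.coe_union]
    constructor
    · rintro ⟨hz1 | hz2, hzU⟩
      · exact ⟨hz1, hzU⟩
      · exfalso
        rw [Finset.mem_coe, Finset.mem_image] at hz2
        obtain ⟨t, _ht, rfl⟩ := hz2
        exact hji (hdisj j i _ hzU (hu i t))
    · exact fun ⟨h1, h2⟩ => ⟨Or.inl h1, h2⟩
  have hSBinterI : ∀ w : ℕ → Bool, (↑(SB w) : Set Γ.D) ∩ U i = (u i) '' (↑(TQ w) : Set ℚ) := by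
    intro w
    simp only [hSB]
    ext z
    rw [Finset.coe_union]
    constructor
    · rintro ⟨hz1 | hz2, hzU⟩
      · exact absurd hzU (hZnotU z hz1)
      · rw [Finset.mem_coe, Finset.mem_image] at hz2
        obtain ⟨t, ht, rfl⟩ := hz2
        exact ⟨t, ht, rfl⟩
    · rintro ⟨t, ht, rfl⟩
      exact ⟨Or.inr (Finset.mem_coe.mpr (Finset.mem_image_of_mem _ ht)), hu i t⟩
  have key : ∀ (w w' : ℕ → Bool) (g : Γ.D ≃ Γ.D), IsAuto Γ g → ⇑g '' ↑(SB w) = ↑(SB w') →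
      ∀ r, r < n → w r = false → w' r = true → False := by
    intro w w' g hg him r hr hwr hw'r
    have hSint : ∀ j : Fin k, ⇑g '' ((↑(SB w) : Set Γ.D) ∩ U j) = (↑(SB w') : Set Γ.D) ∩ U j := by
      intro j
      rw [Set.image_inter g.injective, him, hUim j g hg]
    have hfixZ : ∀ z ∈ Zset, g z = z := by
      intro z hz
      obtain ⟨j, hzU⟩ := hcover z
      have hji : j ≠ i := by
        rintro rfl
        exact hZnotU z hz hzU
      obtain ⟨βg, hβgmono, hβg⟩ := hcoord j g hg
      set Xj : Finset ℚ := (Zset.filter (· ∈ U j)).image (c j) with hXj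
      have hZfin_eq : (Zset.filter (· ∈ U j)).image ⇑g = Zset.filter (· ∈ U j) := by
        apply Finset.coe_injective
        rw [Finset.coe_image]
        have hcoe : (↑(Zset.filter (· ∈ U j)) : Set Γ.D) = ↑Zset ∩ U j := by
          ext z'
          simp [Finset.coe_filter]
        rw [hcoe]
        calc ⇑g '' (↑Zset ∩ U j) = ⇑g '' ((↑(SB w) : Set Γ.D) ∩ U j) := by
              rw [hSBinterZ w j hji]
          _ = (↑(SB w') : Set Γ.D) ∩ U j := hSint j
          _ = ↑Zset ∩ U j := hSBinterZ w' j hji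
      have him1 : Xj.image ⇑βg = Xj.image id := by
        rw [Finset.image_id]
        calc Xj.image ⇑βg = (Zset.filter (· ∈ U j)).image (fun z' => βg (c j z')) := by
              rw [hXj]; exact Finset.image_image
          _ = (Zset.filter (· ∈ U j)).image (fun z' => c j (g z')) := by
              apply Finset.image_congr
              intro x hx
              dsimp only
              rw [Finset.mem_coe, Finset.mem_filter] at hx
              exact ((hβg x hx.2).2).symm
          _ = ((Zset.filter (· ∈ U j)).image ⇑g).image (c j) := Finset.image_image.symm
          _ = Xj := by rw [hZfin_eq, hXj]
      have hagree := mono_agree hβgmono strictMono_id Xj him1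
      have hcz : c j z ∈ Xj := by
        rw [hXj]
        exact Finset.mem_image_of_mem _ (Finset.mem_filter.mpr ⟨hz, hzU⟩)
      have hβz : βg (c j z) = c j z := by simpa using hagree _ hcz
      have hgz := hβg z hzU
      exact hcinjU j _ _ hgz.1 hzU (by rw [hgz.2, hβz])
    obtain ⟨β, hβmono, hβ⟩ := hcoord i g hg
    have hTQim : (TQ w).image ⇑β = TQ w' := by
      have h1 : ((TQ w).image (u i)).image ⇑g = (TQ w').image (u i) := by
        apply Finset.coe_injective
        rw [Finset.coe_image, Finset.coe_image, Finset.coe_image]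
        rw [← hSBinterI w, ← hSBinterI w', hSint i]
      calc (TQ w).image ⇑β = (TQ w).image (fun t => c i (g (u i t))) := by
            apply Finset.image_congr
            intro t _ht
            dsimp only
            rw [(hβ (u i t) (hu i t)).2, hcu]
        _ = (((TQ w).image (u i)).image ⇑g).image (c i) :=
            (Finset.image_image.trans Finset.image_image).symm
        _ = ((TQ w').image (u i)).image (c i) := by rw [h1]
        _ = (TQ w').image (fun t => c i (u i t)) := Finset.image_image
        _ = TQ w' := by
            rw [show (fun t => c i (u i t)) = id from funext (fun t => hcu i t), Finset.image_id]
    have halign := blocks_align hβmono (n+1) (blkD Ah Ah' pad n M w) (blkD Ah Ah' pad n M w')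
      (blkD_ord hbd hM0 hMd hpadlb w) (blkD_ord hbd hM0 hMd hpadlb w')
      (fun r' _hr' => by rw [blkD_card hAhcard hAh'card, blkD_card hAhcard hAh'card])
      (by simp only [hTQ] at hTQim; exact hTQim) r (by omega)
    have hblkim : (Ah.image (fun x => x + (r:ℚ)*M)).image ⇑β = Ah'.image (fun x => x + (r:ℚ)*M) := by
      rw [blkD_of_lt hr, blkD_of_lt hr, hwr, hw'r] at halign
      simpa using halign
    set ρsh : ℚ → ℚ := fun x => ρ (x - (r:ℚ)*M) + (r:ℚ)*M with hρsh
    have hρshmono : StrictMono ρsh := by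
      intro a b hab
      simp only [hρsh]
      have := hρmono (sub_lt_sub_right hab ((r:ℚ)*M))
      linarith
    have him2 : (Ah.image (fun x => x + (r:ℚ)*M)).image ⇑β
        = (Ah.image (fun x => x + (r:ℚ)*M)).image ρsh := by
      rw [hblkim]
      calc Ah'.image (fun x => x + (r:ℚ)*M) = (Ah.image ⇑ρ).image (fun x => x + (r:ℚ)*M) := by
            rw [hAh']
        _ = Ah.image (fun x => ρ x + (r:ℚ)*M) := Finset.image_image
        _ = Ah.image (fun x => ρsh (x + (r:ℚ)*M)) := by
            apply Finset.image_congr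
            intro x _hx
            dsimp only
            simp only [hρsh, add_sub_cancel_right]
        _ = (Ah.image (fun x => x + (r:ℚ)*M)).image ρsh :=
            (Finset.image_image (s := Ah) (f := fun x => x + (r:ℚ)*M) (g := ρsh)).symm
    have hptw := mono_agree hβmono hρshmono _ him2
    set gstar : Γ.D ≃ Γ.D := ((φ ^ r : Equiv.Perm Γ.D).trans g).trans ((φ ^ r : Equiv.Perm Γ.D)).symm with hgstar
    apply hfail
    refine ⟨gstar, isAuto_trans (isAuto_trans (powauto r) hg) (isAuto_symm (powauto r)), ?_, ?_⟩
    · intro x hxA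
      have hxU := hA x hxA
      have hpowx := powfact r x hxU
      have hcx : c i x ∈ Ah := by
        rw [hAh]
        exact Finset.mem_image_of_mem _ hxA
      have h3 : β (c i x + (r:ℚ)*M) = ρ (c i x) + (r:ℚ)*M := by
        have hmem : c i x + (r:ℚ)*M ∈ Ah.image (fun x => x + (r:ℚ)*M) :=
          Finset.mem_image_of_mem _ hcx
        rw [hptw _ hmem]
        simp only [hρsh, add_sub_cancel_right]
      have hgm := hβ _ hpowx.1
      have hex := hρ x hxU
      have hpowe := powfact r (e x) hex.1
      have hceq : c i (g ((φ^r) x)) = c i ((φ^r) (e x)) := by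
        rw [hgm.2, hpowx.2, h3, hpowe.2, hex.2]
      have h4 : g ((φ^r) x) = (φ^r) (e x) := hcinjU i _ _ hgm.1 hpowe.1 hceq
      simp only [hgstar, Equiv.trans_apply]
      rw [h4]
      exact Equiv.symm_apply_apply _ _
    · intro x hxC
      have hzmem : (φ^r) x ∈ Zset := by
        rw [hZ]
        exact Finset.mem_biUnion.mpr ⟨r, Finset.mem_range.mpr hr, Finset.mem_image_of_mem _ hxC⟩
      simp only [hgstar, Equiv.trans_apply]
      rw [hfixZ _ hzmem]
      exact Equiv.symm_apply_apply _ _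
  set ext : (Fin n → Bool) → (ℕ → Bool) := fun v r => if h : r < n then v ⟨r, h⟩ else false with hext
  have hinj2 : Function.Injective (fun v : Fin n → Bool =>
      (⟨OO (ext v), hOmem (ext v)⟩ : ↥(subsetOrbits Γ m))) := by
    intro v v' hvv'
    have hOeq : OO (ext v) = OO (ext v') := congrArg Subtype.val hvv'
    have hmem : (↑(SB (ext v')) : Set Γ.D) ∈ OO (ext v') := by
      refine ⟨Equiv.refl _, isAuto_refl, ?_⟩
      simp
    rw [← hOeq] at hmem
    obtain ⟨g, hg, hgim⟩ := hmem
    funext l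
    have hall : ∀ r, r < n → ext v r = ext v' r := by
      intro r hrn
      cases h1 : ext v r <;> cases h2 : ext v' r
      · rfl
      · exact (key (ext v) (ext v') g hg hgim r hrn h1 h2).elim
      · have hgim' : ⇑g.symm '' ↑(SB (ext v')) = ↑(SB (ext v)) := by
          rw [← hgim, Equiv.symm_image_image]
        exact (key (ext v') (ext v) g.symm (isAuto_symm hg) hgim' r hrn h2 h1).elim
      · rfl
    have hl := hall l.val l.isLt
    simp only [hext, dif_pos l.isLt, Fin.eta] at hl
    exact hl
  have hcard1 := Cardinal.mk_le_of_injective hinj2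
  have hmkfun : Cardinal.mk (Fin n → Bool) = ((2^n : ℕ) : Cardinal) := by
    rw [Cardinal.mk_fintype]
    congr 1
    rw [Fintype.card_fun, Fintype.card_bool, Fintype.card_fin]
  have hnatle : ⌈((2:ℝ) ^ ((1:ℝ)/(2*(K:ℝ))))^m⌉₊ ≤ 2^n := by
    apply Nat.ceil_le.mpr
    calc ((2:ℝ) ^ ((1:ℝ)/(2*(K:ℝ))))^m ≤ ((2^(m/K):ℕ):ℝ) := arith_bound K m hKpos hm
      _ = ((2^n : ℕ):ℝ) := by rw [hn]
  calc (⌈((2:ℝ) ^ ((1:ℝ)/(2*(K:ℝ))))^m⌉₊ : Cardinal) ≤ ((2^n : ℕ) : Cardinal) := by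
        exact_mod_cast hnatle
    _ = Cardinal.mk (Fin n → Bool) := hmkfun.symm
    _ ≤ Cardinal.mk ↥(subsetOrbits Γ m) := hcard1

section glue
variable {σ : Signature} {Γ : RelStruct σ}

lemma mem_orbit_pres {g : Γ.D ≃ Γ.D} (hg : IsAuto Γ g) {a x : Γ.D}
    (hx : x ∈ orbitOf Γ a) : g x ∈ orbitOf Γ a := by
  obtain ⟨f, hf, rfl⟩ := hx
  exact ⟨f.trans g, isAuto_trans hf hg, rfl⟩

lemma orbitOf_eq_of_mem {a x : Γ.D} (hx : x ∈ orbitOf Γ a) :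
    orbitOf Γ x = orbitOf Γ a := by
  obtain ⟨f, hf, rfl⟩ := hx
  ext y
  constructor
  · rintro ⟨h, hh, rfl⟩
    exact ⟨f.trans h, isAuto_trans hf hh, rfl⟩
  · rintro ⟨h, hh, rfl⟩
    refine ⟨f.symm.trans h, isAuto_trans (isAuto_symm hf) hh, ?_⟩
    simp

end glue


/-- Let `Γ` be a countable sub-exponential structure whose orbits on the domain are
`U 0, …, U (k-1)` (pairwise distinct and covering the domain), and suppose each
transitive constituent `G_i = {α|_{U i} : α ∈ Aut(Γ)}` is, via a bijection
`b : U i ≃ ℚ`, exactly the conjugate of the group `Aut(ℚ; <)` of order-preserving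
permutations of `ℚ`. Then a permutation `α` of the domain is an automorphism of `Γ`
if and only if for each `i` its restriction to `U i` belongs to `G_i`, i.e. agrees on
`U i` with some automorphism of `Γ`. -/
theorem stmt7 {σ : Signature} (har : ∀ s : σ.symbols, 0 < σ.arity s)
    (Γ : RelStruct σ) [Countable Γ.D] (hsub : ¬ ExpGrowth Γ)
    (k : ℕ) (U : Fin k → Set Γ.D)
    (horb : ∀ i, IsOrbit Γ (U i))
    (hcover : ∀ x : Γ.D, ∃ i, x ∈ U i)
    (hinj : Function.Injective U)
    (hQ : ∀ i, ∃ b : ↥(U i) ≃ ℚ, ∀ g : ↥(U i) ≃ ↥(U i),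
      ((∃ e : Γ.D ≃ Γ.D, IsAuto Γ e ∧ ∀ x : ↥(U i), (g x : Γ.D) = e (x : Γ.D)) ↔
        ∃ β : ℚ ≃ ℚ, StrictMono ⇑β ∧ ∀ x : ↥(U i), g x = b.symm (β (b x)))) :
    ∀ α : Γ.D ≃ Γ.D,
      (IsAuto Γ α ↔
        ∀ i, ∃ e : Γ.D ≃ Γ.D, IsAuto Γ e ∧ ∀ x ∈ U i, α x = e x) := by

  intro α
  constructor
  · intro hα i
    exact ⟨α, hα, fun x _ => rfl⟩
  intro hyp
  classical
  choose b hb using hQ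
  choose E hEauto hEagr using hyp
  set c : Fin k → Γ.D → ℚ := fun i x => if h : x ∈ U i then b i ⟨x, h⟩ else 0 with hc
  set u : Fin k → ℚ → Γ.D := fun i t => ((b i).symm t : Γ.D) with hudef
  have hcUi : ∀ (i : Fin k) (x : Γ.D) (h : x ∈ U i), c i x = b i ⟨x, h⟩ := by
    intro i x h
    simp only [hc, dif_pos h]
  have hu : ∀ i t, u i t ∈ U i := fun i t => ((b i).symm t).2
  have hcu : ∀ i t, c i (u i t) = t := by
    intro i t
    rw [hcUi i (u i t) (hu i t)]
    simp only [hudef, Subtype.coe_eta, Equiv.apply_symm_apply]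
  have huc : ∀ i x, x ∈ U i → u i (c i x) = x := by
    intro i x h
    rw [hcUi i x h]
    simp only [hudef, Equiv.symm_apply_apply]
  have hpres : ∀ (i : Fin k) (g : Γ.D ≃ Γ.D), IsAuto Γ g → ∀ x ∈ U i, g x ∈ U i := by
    intro i g hg x hx
    obtain ⟨a, ha⟩ := horb i
    rw [ha] at hx ⊢
    exact mem_orbit_pres hg hx
  have hmemiff : ∀ (i : Fin k) (g : Γ.D ≃ Γ.D), IsAuto Γ g → ∀ x : Γ.D, x ∈ U i ↔ g x ∈ U i := by
    intro i g hg x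
    constructor
    · exact hpres i g hg x
    · intro h
      have := hpres i g.symm (isAuto_symm hg) (g x) h
      simpa using this
  have hcoord : ∀ (i : Fin k) (g : Γ.D ≃ Γ.D), IsAuto Γ g →
      ∃ β : ℚ ≃ ℚ, StrictMono ⇑β ∧ ∀ x ∈ U i, g x ∈ U i ∧ c i (g x) = β (c i x) := by
    intro i g hg
    have hgq : ∃ β : ℚ ≃ ℚ, StrictMono ⇑β ∧
        ∀ x : ↥(U i), g.subtypeEquiv (hmemiff i g hg) x = (b i).symm (β (b i x)) :=
      (hb i (g.subtypeEquiv (hmemiff i g hg))).mp ⟨g, hg, fun x => rfl⟩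
    obtain ⟨β, hβ, hβx⟩ := hgq
    refine ⟨β, hβ, fun x hx => ⟨hpres i g hg x hx, ?_⟩⟩
    have h1 := hβx ⟨x, hx⟩
    have h2 : g x = ((b i).symm (β (b i ⟨x, hx⟩)) : Γ.D) := by
      rw [← h1]; rfl
    rw [hcUi i x hx, h2, hcUi i _ ((b i).symm (β (b i ⟨x, hx⟩))).2]
    simp only [Subtype.coe_eta, Equiv.apply_symm_apply]
  have hreal : ∀ (i : Fin k) (β : ℚ ≃ ℚ), StrictMono ⇑β →
      ∃ g : Γ.D ≃ Γ.D, IsAuto Γ g ∧ ∀ x ∈ U i, g x = u i (β (c i x)) := by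
    intro i β hβ
    have hgq := (hb i ((b i).trans (β.trans (b i).symm))).mpr ⟨β, hβ, fun x => rfl⟩
    obtain ⟨g, hg, hgx⟩ := hgq
    refine ⟨g, hg, fun x hx => ?_⟩
    have := hgx ⟨x, hx⟩
    rw [← this]
    simp only [hudef, Equiv.trans_apply, hcUi i x hx]
  have hdisj : ∀ (i j : Fin k) (x : Γ.D), x ∈ U i → x ∈ U j → i = j := by
    intro i j x hxi hxj
    obtain ⟨a, ha⟩ := horb i
    obtain ⟨a', ha'⟩ := horb j
    apply hinj
    rw [ha, ha', ← orbitOf_eq_of_mem (a := a) (ha ▸ hxi), ← orbitOf_eq_of_mem (a := a') (ha' ▸ hxj)]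
  have SSc : ∀ (eE : Γ.D ≃ Γ.D), IsAuto Γ eE → ∀ (i : Fin k) (F : Finset Γ.D),
      ∃ g : Γ.D ≃ Γ.D, IsAuto Γ g ∧ (∀ x ∈ F, x ∈ U i → g x = eE x) ∧
        (∀ x ∈ F, x ∉ U i → g x = x) := by
    intro eE heE i F
    by_contra hfail
    apply hsub
    have hfail' : ¬ ∃ g : Γ.D ≃ Γ.D, IsAuto Γ g ∧ (∀ x ∈ F.filter (· ∈ U i), g x = eE x) ∧
        (∀ x ∈ F.filter (· ∉ U i), g x = x) := by
      rintro ⟨g, hg, h1, h2⟩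
      exact hfail ⟨g, hg, fun x hx hxU => h1 x (Finset.mem_filter.mpr ⟨hx, hxU⟩),
        fun x hx hxU => h2 x (Finset.mem_filter.mpr ⟨hx, hxU⟩)⟩
    have hAne : (F.filter (· ∈ U i)).Nonempty := by
      rcases Finset.eq_empty_or_nonempty (F.filter (· ∈ U i)) with hemp | hne
      · exfalso
        apply hfail'
        refine ⟨Equiv.refl _, isAuto_refl, ?_, fun x _ => rfl⟩
        intro x hx
        rw [hemp] at hx
        exact absurd hx (Finset.notMem_empty x)
      · exact hne
    exact growth_of_fail c u hu hcu huc hcoord hreal hdisj hcover i eE heE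
      (F.filter (· ∈ U i)) (F.filter (· ∉ U i))
      (fun x hx => (Finset.mem_filter.mp hx).2)
      (fun x hx => (Finset.mem_filter.mp hx).2)
      hAne hfail'
  have main : ∀ F : Finset Γ.D, ∃ g : Γ.D ≃ Γ.D, IsAuto Γ g ∧ ∀ x ∈ F, g x = α x := by
    intro F
    have ind : ∀ l : ℕ, ∃ g : Γ.D ≃ Γ.D, IsAuto Γ g ∧
        ∀ x ∈ F, ∀ i : Fin k, x ∈ U i → (i : ℕ) < l → g x = α x := by
      intro l
      induction l with
      | zero => exact ⟨Equiv.refl _, isAuto_refl, fun x _ i _ h => absurd h (by omega)⟩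
      | succ l ih =>
        obtain ⟨g, hg, hgx⟩ := ih
        by_cases hl : l < k
        · set i₀ : Fin k := ⟨l, hl⟩ with hi₀
          obtain ⟨h, hh, hA, hC⟩ := SSc (g.symm.trans (E i₀))
            (isAuto_trans (isAuto_symm hg) (hEauto i₀)) i₀ (F.image ⇑g)
          refine ⟨g.trans h, isAuto_trans hg hh, ?_⟩
          intro x hxF i hxU hil
          have hgim : g x ∈ F.image ⇑g := Finset.mem_image_of_mem _ hxF
          rcases Nat.lt_succ_iff_lt_or_eq.mp hil with h1 | h2
          · have hprev := hgx x hxF i hxU h1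
            have hαU : α x ∈ U i := by
              rw [hEagr i x hxU]
              exact hpres i (E i) (hEauto i) x hxU
            have hnotU : g x ∉ U i₀ := by
              rw [hprev]
              intro hmem
              have hieq := hdisj i i₀ (α x) hαU hmem
              have : (i : ℕ) = l := by rw [hieq, hi₀]
              omega
            have := hC (g x) hgim hnotU
            simp only [Equiv.trans_apply]
            rw [this, hprev]
          · have hii : i = i₀ := Fin.ext (by rw [hi₀]; exact h2)
            rw [hii] at hxU
            have hgU : g x ∈ U i₀ := hpres i₀ g hg x hxU
            have := hA (g x) hgim hgU
            simp only [Equiv.trans_apply]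
            rw [this]
            simp only [Equiv.trans_apply, Equiv.symm_apply_apply]
            exact (hEagr i₀ x hxU).symm
        · refine ⟨g, hg, fun x hxF i hxU _ => hgx x hxF i hxU ?_⟩
          have := i.isLt
          omega
    obtain ⟨g, hg, hgx⟩ := ind k
    refine ⟨g, hg, fun x hx => ?_⟩
    obtain ⟨i, hi⟩ := hcover x
    exact hgx x hx i hi i.isLt
  intro s t
  obtain ⟨g, hg, hgx⟩ := main (Finset.image t Finset.univ)
  have heq : (fun l => α (t l)) = fun l => g (t l) :=
    funext fun l => (hgx (t l) (Finset.mem_image_of_mem t (Finset.mem_univ l))).symm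
  rw [heq]
  exact hg s t
end
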